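/- Let e ≥ 1 and Δ be integers with 1 ≤ Δ < 2^e, and set m = 2^e + Δ. If t is an integer with 2^e < t ≤ m − 1 such that C(m−t+Δ, Δ) is odd, and A = Δ − 2^{ν(m−t)} (note that 2^{ν(m−t)} ≤ m − t ≤ Δ − 1, so A ≥ 1), then C(2m−t, m) + C(2m−A−t, m−t) is odd. -/

import Mathlib

private lemma lucas2 (n k : ℕ) :
    (n.choose k) % 2 = (Nat.choose (n % 2) (k % 2) * Nat.choose (n / 2) (k / 2)) % 2 :=
  haveI : Fact (Nat.Prime 2) := ⟨Nat.prime_two⟩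
  Choose.choose_modEq_choose_mod_mul_choose_div_nat

private lemma odd_choose_add_aux : ∀ n a b : ℕ, a + b ≤ n →
    (Odd ((a + b).choose b) ↔ ∀ i, a / 2 ^ i % 2 + b / 2 ^ i % 2 ≤ 1) := by
  intro n
  induction n with
  | zero =>
    intro a b h
    have ha : a = 0 := by omega
    have hb : b = 0 := by omega
    subst ha hb
    simp
  | succ n ih =>
    intro a b h
    rcases Nat.eq_zero_or_pos (a + b) with h0 | h0
    · have ha : a = 0 := by omega
      have hb : b = 0 := by omega
      subst ha hb; simp
    rw [Nat.odd_iff, lucas2]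
    rcases Nat.mod_two_eq_zero_or_one a with ha | ha <;>
      rcases Nat.mod_two_eq_zero_or_one b with hb | hb
    pick_goal 4
    · -- both odd: choose ((a+b)%2) (b%2) = choose 0 1 = 0
      have h1 : (a + b) % 2 = 0 := by omega
      rw [h1, hb]
      simp only [Nat.choose_eq_zero_of_lt (by norm_num : (0:ℕ) < 1), Nat.zero_mul]
      constructor
      · intro hc; omega
      · intro hc
        have := hc 0
        simp at this
        omega
    all_goals
    · have h1 : (a + b) % 2 = a % 2 + b % 2 := by omega
      have h2 : (a + b) / 2 = a / 2 + b / 2 := by omega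
      have h3 : Nat.choose ((a + b) % 2) (b % 2) = 1 := by
        rw [h1, ha, hb] <;> simp
      have hle : a / 2 + b / 2 ≤ n := by omega
      have IH := ih (a / 2) (b / 2) hle
      rw [Nat.odd_iff] at IH
      rw [h2, h3, one_mul, IH]
      constructor
      · intro hall i
        cases i with
        | zero => simp only [pow_zero, Nat.div_one]; omega
        | succ i =>
          have := hall i
          rw [pow_succ, mul_comm, ← Nat.div_div_eq_div_mul, ← Nat.div_div_eq_div_mul]
          exact this
      · intro hall i
        have := hall (i + 1)
        rwa [pow_succ, mul_comm, ← Nat.div_div_eq_div_mul, ← Nat.div_div_eq_div_mul] at this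

private lemma odd_choose_add_iff (a b : ℕ) :
    Odd ((a + b).choose b) ↔ ∀ i, a / 2 ^ i % 2 + b / 2 ^ i % 2 ≤ 1 :=
  odd_choose_add_aux (a + b) a b le_rfl

/-- Proposition 2.5(2e): with `m = 2^e + Δ`, `1 ≤ Δ < 2^e`, `2^e < t ≤ m - 1`,
`C(m-t+Δ, Δ)` odd, and `A = Δ - 2^{ν(m-t)}` (where `ν` is the 2-adic valuation),
the sum `C(2m-t, m) + C(2m-A-t, m-t)` is odd. -/
theorem stmt_8 (e Δ m t A : ℕ) (he : 1 ≤ e) (hΔ1 : 1 ≤ Δ) (hΔ2 : Δ < 2 ^ e)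
    (hm : m = 2 ^ e + Δ) (ht1 : 2 ^ e < t) (ht2 : t ≤ m - 1)
    (hodd : Odd (Nat.choose (m - t + Δ) Δ)) (hA : A = Δ - 2 ^ padicValNat 2 (m - t)) :
    Odd (Nat.choose (2 * m - t) m + Nat.choose (2 * m - A - t) (m - t)) := by
  set s := m - t with hs
  set v := padicValNat 2 s with hv
  have hs1 : 1 ≤ s := by omega
  have hsΔ : s < Δ := by omega
  have hs0 : s ≠ 0 := by omega
  have hbits : ∀ i, s / 2 ^ i % 2 + Δ / 2 ^ i % 2 ≤ 1 :=
    (odd_choose_add_iff s Δ).mp hodd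
  have h2v : 2 ^ v ∣ s := by rw [hv]; exact pow_padicValNat_dvd
  have hvle : 2 ^ v ≤ s := Nat.le_of_dvd (by omega) h2v
  have hsv : s / 2 ^ v % 2 = 1 := by
    have hnd : ¬ 2 ∣ s / 2 ^ (s.factorization 2) :=
      Nat.not_dvd_ordCompl Nat.prime_two hs0
    rw [Nat.factorization_def s Nat.prime_two, ← hv] at hnd
    omega
  have hve : v < e := by
    have : 2 ^ v < 2 ^ e := by omega
    exact (Nat.pow_lt_pow_iff_right one_lt_two).mp this
  -- rewrite the goal
  have e1 : 2 * m - t = m + s := by omega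
  have e2 : 2 * m - A - t = 2 ^ e + 2 ^ v + s := by omega
  rw [e1, e2]
  have e3 : (m + s).choose m = (m + s).choose s := Nat.choose_symm_add
  rw [e3]
  have hodd1 : Odd ((m + s).choose s) := by
    rw [odd_choose_add_iff]
    intro i
    rcases lt_or_ge i e with hie | hie
    · have hdig : m / 2 ^ i % 2 = Δ / 2 ^ i % 2 := by
        have hme : m = 2 ^ i * 2 ^ (e - i) + Δ := by
          rw [hm, ← pow_add]
          congr 2
          omega
        rw [hme, Nat.mul_add_div (by positivity : 0 < 2 ^ i)]
        have : 2 ∣ 2 ^ (e - i) := dvd_pow_self 2 (by omega)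
        omega
      have := hbits i
      omega
    · have hsz : s / 2 ^ i = 0 := by
        apply Nat.div_eq_of_lt
        calc s < 2 ^ e := by omega
        _ ≤ 2 ^ i := Nat.pow_le_pow_right (by norm_num) hie
      have := Nat.mod_lt (m / 2 ^ i) (show 0 < 2 by norm_num)
      omega
  have heven2 : ¬ Odd ((2 ^ e + 2 ^ v + s).choose s) := by
    intro hcon
    have := (odd_choose_add_iff (2 ^ e + 2 ^ v) s).mp hcon v
    have hdig : (2 ^ e + 2 ^ v) / 2 ^ v = 2 ^ (e - v) + 1 := by
      have hme : 2 ^ e + 2 ^ v = 2 ^ v * (2 ^ (e - v) + 1) := by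
        rw [Nat.mul_add, ← pow_add, mul_one]
        congr 2
        omega
      rw [hme, Nat.mul_div_cancel_left _ (by positivity : 0 < 2 ^ v)]
    have h2d : 2 ∣ 2 ^ (e - v) := dvd_pow_self 2 (by omega)
    rw [hdig] at this
    omega
  exact hodd1.add_even (Nat.not_odd_iff_even.mp heven2)
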